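/- Let (Ω, 𝓕, ν) be a probability space and let Θ = [-1,1]^M be equipped with its Borel σ-algebra 𝓔 and the uniform probability measure λ(dθ) = 2^{-M} dθ. Let (f_n)_{n∈ℕ} be functions f_n : Θ × Ω → ℝ such that there exists f ∈ L²(Θ, 𝓔, λ) with Var_λ(f) > 0 and for ν-almost all ω: f_n(θ, ω) → f(θ) for all θ ∈ Θ, each f_n(·, ω) is 𝓔-measurable, and there exists φ_ω ∈ L²(Θ, 𝓔, λ) with |f_n(θ, ω)| ≤ φ_ω(θ) for all θ and all n. Then for each j ∈ {1, …, M}, the total Sobol' indices satisfy T_j(f_n(·, ω)) → T_j(f) as n → ∞, for ν-almost all ω ∈ Ω. -/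

import Mathlib

open MeasureTheory ProbabilityTheory Filter

/-- The uniform probability measure `λ(dθ) = 2^{-M} dθ` on `Θ = [-1,1]^M`. -/
noncomputable def uniformCube (M : ℕ) : Measure (Fin M → ℝ) :=
  Measure.pi fun _ => (2 : ENNReal)⁻¹ • volume.restrict (Set.Icc (-1 : ℝ) 1)

/-- The sub-σ-algebra of the (Borel) product σ-algebra of `Θ = [-1,1]^M`
generated by the coordinate projections `θ ↦ θ j` for `j ∈ W`. -/
def coordSigmaAlgebra (M : ℕ) (W : Finset (Fin M)) : MeasurableSpace (Fin M → ℝ) :=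
  ⨆ j ∈ W, MeasurableSpace.comap (fun θ : Fin M → ℝ => θ j) inferInstance

/-- The "closed" variance of a group of variables: `Var_λ(E_λ[g | θ_W])`. -/
noncomputable def closedVariance (M : ℕ) (g : (Fin M → ℝ) → ℝ)
    (W : Finset (Fin M)) : ℝ :=
  variance ((uniformCube M)[g|coordSigmaAlgebra M W]) (uniformCube M)

/-- The variance contribution `D_U` of the subset `U` in the ANOVA/Sobol'
decomposition of `g`, obtained from the closed variances by Möbius
inversion: `D_U = ∑_{W ⊆ U} (-1)^{|U|-|W|} Var(E[g | θ_W])`. -/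
noncomputable def anovaVariance (M : ℕ) (g : (Fin M → ℝ) → ℝ)
    (U : Finset (Fin M)) : ℝ :=
  ∑ W ∈ U.powerset, (-1 : ℝ) ^ (U.card - W.card) * closedVariance M g W

/-- The total Sobol' index of the `j`-th coordinate:
`T_j(g) = ∑_{U ∋ j} D_U / Var_λ(g)`, the sum of the Sobol'-decomposition group
indices `S_U(g) = D_U / Var_λ(g)` over all subsets `U ⊆ {1,…,M}` with `j ∈ U`. -/
noncomputable def totalSobolIndex (M : ℕ) (g : (Fin M → ℝ) → ℝ) (j : Fin M) : ℝ :=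
  (∑ U ∈ (Finset.univ : Finset (Fin M)).powerset.filter (fun U => j ∈ U),
      anovaVariance M g U) / variance g (uniformCube M)

section Aux

open RealInnerProductSpace

instance uniformFactor_isProb :
    IsProbabilityMeasure ((2 : ENNReal)⁻¹ • volume.restrict (Set.Icc (-1 : ℝ) 1)) := by
  constructor
  rw [Measure.smul_apply, Measure.restrict_apply_univ, Real.volume_Icc]
  norm_num
  exact ENNReal.inv_mul_cancel two_ne_zero ENNReal.ofNat_ne_top

instance uniformCube_isProb (M : ℕ) : IsProbabilityMeasure (uniformCube M) := by
  unfold uniformCube; infer_instance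

lemma coordSigmaAlgebra_le (M : ℕ) (W : Finset (Fin M)) :
    coordSigmaAlgebra M W ≤ (inferInstance : MeasurableSpace (Fin M → ℝ)) :=
  iSup_le fun j => iSup_le fun _ => (measurable_pi_apply j).comap_le

lemma unifIntegrable_of_abs_le {α : Type*} [MeasurableSpace α] {μ : Measure α}
    {f : ℕ → α → ℝ} {φ : α → ℝ} (hφ : MemLp φ 2 μ)
    (hle : ∀ n x, |f n x| ≤ φ x) : UnifIntegrable f 2 μ := by
  intro ε hε
  obtain ⟨δ, hδ, hδ'⟩ :=
    unifIntegrable_const (μ := μ) (ι := ℕ) one_le_two ENNReal.ofNat_ne_top hφ hε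
  refine ⟨δ, hδ, fun n s hs hμs => le_trans (eLpNorm_mono fun x => ?_) (hδ' n s hs hμs)⟩
  by_cases hx : x ∈ s
  · simp only [Set.indicator_of_mem hx, Real.norm_eq_abs]
    exact (hle n x).trans (le_abs_self _)
  · simp [Set.indicator_of_notMem hx]

/-- The constant function `1` as an element of `L²`. -/
noncomputable def oneL2 {α : Type*} [MeasurableSpace α] (μ : Measure α) [IsFiniteMeasure μ] :
    Lp ℝ 2 μ :=
  (memLp_const (1 : ℝ)).toLp (fun _ => (1 : ℝ))

lemma oneL2_coeFn {α : Type*} [MeasurableSpace α] (μ : Measure α) [IsFiniteMeasure μ] :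
    (oneL2 μ : α → ℝ) =ᵐ[μ] fun _ => (1 : ℝ) :=
  MemLp.coeFn_toLp _

/-- The variance, as a function on `L²`. -/
noncomputable def varL {α : Type*} [MeasurableSpace α] (μ : Measure α) [IsFiniteMeasure μ]
    (F : Lp ℝ 2 μ) : ℝ :=
  ⟪F, F⟫ - ⟪oneL2 μ, F⟫ ^ 2

lemma continuous_varL {α : Type*} [MeasurableSpace α] (μ : Measure α) [IsFiniteMeasure μ] :
    Continuous (varL μ) := by
  have h1 : Continuous fun F : Lp ℝ 2 μ => (⟪F, F⟫ : ℝ) :=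
    continuous_inner.comp (continuous_id.prodMk continuous_id)
  have h2 : Continuous fun F : Lp ℝ 2 μ => (⟪oneL2 μ, F⟫ : ℝ) :=
    continuous_inner.comp (continuous_const.prodMk continuous_id)
  exact h1.sub (h2.pow 2)

lemma variance_eq_varL {α : Type*} [MeasurableSpace α] {μ : Measure α} [IsProbabilityMeasure μ]
    {g : α → ℝ} (hg : MemLp g 2 μ) : variance g μ = varL μ (hg.toLp g) := by
  have h1 : (⟪hg.toLp g, hg.toLp g⟫ : ℝ) = ∫ a, (g ^ 2) a ∂μ := by
    rw [MeasureTheory.L2.inner_def]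
    refine integral_congr_ae ?_
    filter_upwards [hg.coeFn_toLp] with a ha
    simp [ha, RCLike.inner_apply, starRingEnd_apply, sq]
  have h2 : (⟪oneL2 μ, hg.toLp g⟫ : ℝ) = ∫ a, g a ∂μ := by
    rw [MeasureTheory.L2.inner_def]
    refine integral_congr_ae ?_
    filter_upwards [hg.coeFn_toLp, oneL2_coeFn μ] with a ha hb
    simp [ha, hb, RCLike.inner_apply, starRingEnd_apply]
  rw [variance_eq_sub hg, varL, h1, h2]

lemma condexp_ae_eq_condexpL2 {α : Type*} {m m0 : MeasurableSpace α} (hm : m ≤ m0)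
    {μ : Measure α} [IsProbabilityMeasure μ] {g : α → ℝ} (hg : MemLp g 2 μ) :
    μ[g|m] =ᵐ[μ] ((condExpL2 ℝ ℝ hm (hg.toLp g) : Lp ℝ 2 μ) : α → ℝ) := by
  haveI : SigmaFinite (μ.trim hm) := inferInstance
  refine (ae_eq_condExp_of_forall_setIntegral_eq hm (hg.integrable one_le_two)
    (fun s _ hμs => integrableOn_condExpL2_of_measure_ne_top hm hμs.ne _)
    (fun s hs hμs => ?_) (aestronglyMeasurable_condExpL2 hm _)).symm
  rw [integral_condExpL2_eq hm (hg.toLp g) hs hμs.ne]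
  exact integral_congr_ae (ae_restrict_of_ae hg.coeFn_toLp)

lemma closedVariance_eq (M : ℕ) (W : Finset (Fin M)) {g : (Fin M → ℝ) → ℝ}
    (hg : MemLp g 2 (uniformCube M)) :
    closedVariance M g W = varL (uniformCube M)
      ((condExpL2 ℝ ℝ (coordSigmaAlgebra_le M W) (hg.toLp g) : Lp ℝ 2 (uniformCube M))) := by
  have hae := condexp_ae_eq_condexpL2 (coordSigmaAlgebra_le M W) hg
  have hmem : MemLp ((uniformCube M)[g|coordSigmaAlgebra M W]) 2 (uniformCube M) :=
    (Lp.memLp _).ae_eq hae.symm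
  rw [closedVariance, variance_eq_varL hmem]
  congr 1
  rw [MemLp.toLp_congr hmem (Lp.memLp _) hae, Lp.toLp_coeFn]

end Aux

/-- Almost sure convergence of stochastic total Sobol' indices: if for ν-a.a.
`ω` the functions `f_n(·, ω)` are measurable, converge pointwise on `Θ` to
`f ∈ L²(Θ, λ)` with `Var_λ(f) > 0`, and are dominated by some `φ_ω ∈ L²(Θ, λ)`,
then for each coordinate `j`, `T_j(f_n(·,ω)) → T_j(f)` ν-almost surely. -/

theorem stochastic_total_sobol_index_tendsto_ae
    {Ω : Type*} [MeasurableSpace Ω] (ν : Measure Ω) [IsProbabilityMeasure ν]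
    {M : ℕ} (f : ℕ → (Fin M → ℝ) → Ω → ℝ) (flim : (Fin M → ℝ) → ℝ)
    (hflim : MemLp flim 2 (uniformCube M))
    (hvar : 0 < variance flim (uniformCube M))
    (hconv : ∀ᵐ ω ∂ν, ∀ θ, Tendsto (fun n => f n θ ω) atTop (nhds (flim θ)))
    (hmeas_bdd : ∀ᵐ ω ∂ν, (∀ n, Measurable fun θ => f n θ ω) ∧
      ∃ φ : (Fin M → ℝ) → ℝ, MemLp φ 2 (uniformCube M) ∧ ∀ θ, ∀ n, |f n θ ω| ≤ φ θ) :
    ∀ j : Fin M, ∀ᵐ ω ∂ν,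
      Tendsto (fun n => totalSobolIndex M (fun θ => f n θ ω) j) atTop
        (nhds (totalSobolIndex M flim j)) := by
  intro j
  filter_upwards [hconv, hmeas_bdd] with ω hω hmb
  obtain ⟨hmeas, φ, hφ, hbd⟩ := hmb
  have hmem : ∀ n, MemLp (fun θ => f n θ ω) 2 (uniformCube M) := fun n =>
    hφ.of_le (hmeas n).aestronglyMeasurable (Filter.Eventually.of_forall fun θ => by
      simpa only [Real.norm_eq_abs] using (hbd θ n).trans (le_abs_self _))
  have hui : UnifIntegrable (fun n θ => f n θ ω) 2 (uniformCube M) :=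
    unifIntegrable_of_abs_le hφ (fun n θ => hbd θ n)
  have hL := tendsto_Lp_finite_of_tendsto_ae (μ := uniformCube M) one_le_two ENNReal.ofNat_ne_top
      (fun n => (hmeas n).aestronglyMeasurable) hflim hui (Filter.Eventually.of_forall hω)
  have hGn : Tendsto (fun n => (hmem n).toLp _) atTop (nhds (hflim.toLp flim)) := by
    rw [tendsto_iff_norm_sub_tendsto_zero]
    have heq : ∀ n, ‖(hmem n).toLp _ - hflim.toLp flim‖
        = (eLpNorm ((fun θ => f n θ ω) - flim) 2 (uniformCube M)).toReal := fun n => by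
      rw [← MemLp.toLp_sub (hmem n) hflim, Lp.norm_toLp]
    simp only [heq]
    have h := (ENNReal.tendsto_toReal (by simp : (0 : ENNReal) ≠ ⊤)).comp hL
    simpa [Function.comp_def] using h
  have h1 : Tendsto (fun n => variance (fun θ => f n θ ω) (uniformCube M)) atTop
      (nhds (variance flim (uniformCube M))) := by
    have h := ((continuous_varL (uniformCube M)).tendsto (hflim.toLp flim)).comp hGn
    rw [show varL (uniformCube M) (hflim.toLp flim) = variance flim (uniformCube M) from
      (variance_eq_varL hflim).symm] at h
    exact Filter.Tendsto.congr (fun n => (variance_eq_varL (hmem n)).symm) h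
  have h2 : ∀ W : Finset (Fin M),
      Tendsto (fun n => closedVariance M (fun θ => f n θ ω) W) atTop
        (nhds (closedVariance M flim W)) := by
    intro W
    have hc : Continuous fun F : Lp ℝ 2 (uniformCube M) =>
        varL (uniformCube M)
          ((condExpL2 ℝ ℝ (coordSigmaAlgebra_le M W) F : Lp ℝ 2 (uniformCube M))) :=
      (continuous_varL (uniformCube M)).comp
        (continuous_subtype_val.comp (condExpL2 ℝ ℝ (coordSigmaAlgebra_le M W)).continuous)
    have h := (hc.tendsto (hflim.toLp flim)).comp hGn
    rw [show varL (uniformCube M)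
        ((condExpL2 ℝ ℝ (coordSigmaAlgebra_le M W) (hflim.toLp flim) : Lp ℝ 2 (uniformCube M)))
        = closedVariance M flim W from (closedVariance_eq M W hflim).symm] at h
    exact Filter.Tendsto.congr (fun n => (closedVariance_eq M W (hmem n)).symm) h
  have hnum : Tendsto (fun n =>
      ∑ U ∈ (Finset.univ : Finset (Fin M)).powerset.filter (fun U => j ∈ U),
        anovaVariance M (fun θ => f n θ ω) U) atTop
      (nhds (∑ U ∈ (Finset.univ : Finset (Fin M)).powerset.filter (fun U => j ∈ U),
        anovaVariance M flim U)) := by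
    refine tendsto_finset_sum _ fun U _ => ?_
    unfold anovaVariance
    exact tendsto_finset_sum _ fun W _ => (h2 W).const_mul _
  simpa [totalSobolIndex, Pi.div_def] using hnum.div h1 (ne_of_gt hvar)
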